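/- If each block C_j^B of the greedily constructed ordered partition contains exactly one sample point, then the corresponding smallest interval [L_S(Z),1] is admissible in the class B_B: for any [L(Z),1] ∈ B_B with L_S(z) ≤ L(z) for all z ∈ S, one has L_S(z) = L(z) for all z ∈ S. -/
import Mathlib


open Finset
open scoped Classical

noncomputable section

/-- Binomial probability mass function `P(X = x)` for `X ~ Bin(n, p)`. -/
def binomPMF (n : ℕ) (p : ℝ) (x : ℕ) : ℝ :=
  (n.choose x : ℝ) * p ^ x * (1 - p) ^ (n - x)

/-- Probability of a set `T` of sample points under independent `X ~ Bin(n,p₁)`, `Y ~ Bin(m,p₀)`. -/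
def prob (n m : ℕ) (p₁ p₀ : ℝ) (T : Finset (ℕ × ℕ)) : ℝ :=
  ∑ z ∈ T, binomPMF n p₁ z.1 * binomPMF m p₀ z.2

/-- The range `D(Δ)` of the nuisance parameter `p₀`: `[0, 1-Δ]` if `Δ ≥ 0`, `[-Δ, 1]` if `Δ ≤ 0`. -/
def Dset (Δ : ℝ) : Set ℝ :=
  {p₀ | 0 ≤ p₀ ∧ p₀ ≤ 1 ∧ 0 ≤ p₀ + Δ ∧ p₀ + Δ ≤ 1}

/-- The sample space `S = {(x,y) : 0 ≤ x ≤ n, 0 ≤ y ≤ m}`. -/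
def sampleSpace (n m : ℕ) : Finset (ℕ × ℕ) :=
  Finset.range (n + 1) ×ˢ Finset.range (m + 1)

/-- `{C_j}` is an ordered partition of the sample space `S`. -/
def IsOrderedPartition (n m k₀ : ℕ) (C : Fin k₀ → Finset (ℕ × ℕ)) : Prop :=
  (∀ i j : Fin k₀, i ≠ j → Disjoint (C i) (C j)) ∧
  Finset.univ.biUnion C = sampleSpace n m ∧
  ∀ j, (C j).Nonempty

/-- `S_jᶜ`, the complement in `S` of `S_j = ∪_{i ≤ j} C_i`. -/
def SjCompl (n m k₀ : ℕ) (C : Fin k₀ → Finset (ℕ × ℕ)) (j : Fin k₀) : Finset (ℕ × ℕ) :=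
  (sampleSpace n m).filter (fun z => ¬ ∃ i, i ≤ j ∧ z ∈ C i)

/-- `f_j(Δ) = min_{p₀ ∈ D(Δ)} P_{(Δ,p₀)}(S_jᶜ)`. -/
def fj (n m k₀ : ℕ) (C : Fin k₀ → Finset (ℕ × ℕ)) (j : Fin k₀) (Δ : ℝ) : ℝ :=
  sInf ((fun p₀ => prob n m (p₀ + Δ) p₀ (SjCompl n m k₀ C j)) '' Dset Δ)

/-- `G_z = {Δ ∈ [-1,1] : f_j(Δ') ≥ 1-α for all Δ' < Δ}` (for `z ∈ C_j`). -/
def Gj (n m k₀ : ℕ) (α : ℝ) (C : Fin k₀ → Finset (ℕ × ℕ)) (j : Fin k₀) : Set ℝ :=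
  {Δ ∈ Set.Icc (-1 : ℝ) 1 | ∀ Δ' ∈ Set.Ico (-1 : ℝ) Δ, 1 - α ≤ fj n m k₀ C j Δ'}

/-- `L_S` on the block `C_j`: `sup G_z` if `G_z ≠ ∅`, and `-1` otherwise. -/
def LSj (n m k₀ : ℕ) (α : ℝ) (C : Fin k₀ → Finset (ℕ × ℕ)) (j : Fin k₀) : ℝ :=
  if (Gj n m k₀ α C j).Nonempty then sSup (Gj n m k₀ α C j) else -1

/-- `∪_{j=1}^{t} C_j`, the union of the first `t` blocks of the ordered partition. -/
def unionUpTo (n m k₀ : ℕ) (C : Fin k₀ → Finset (ℕ × ℕ)) (t : ℕ) : Finset (ℕ × ℕ) :=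
  (sampleSpace n m).filter (fun z => ∃ i : Fin k₀, (i : ℕ) < t ∧ z ∈ C i)

/-- `s(δ) = max{t ≤ k₀ : sup_{(Δ,p₀) : Δ ≤ δ} P(∪_{j=1}^t C_j) ≤ α}`. -/
def sIndex (n m k₀ : ℕ) (α : ℝ) (C : Fin k₀ → Finset (ℕ × ℕ)) (δ : ℝ) : ℕ :=
  sSup {t : ℕ | t ≤ k₀ ∧ ∀ Δ ∈ Set.Icc (-1 : ℝ) 1, Δ ≤ δ → ∀ p₀ ∈ Dset Δ,
    prob n m (p₀ + Δ) p₀ (unionUpTo n m k₀ C t) ≤ α}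

/-- `C_T(z) = {δ ∈ [-1,1] : z ∉ ∪_{j=1}^{s(δ)} C_j}`, the test-inversion confidence set. -/
def CTset (n m k₀ : ℕ) (α : ℝ) (C : Fin k₀ → Finset (ℕ × ℕ)) (z : ℕ × ℕ) : Set ℝ :=
  {δ ∈ Set.Icc (-1 : ℝ) 1 | z ∉ unionUpTo n m k₀ C (sIndex n m k₀ α C δ)}

/-- The neighbor set `N_k` of the set `S_k` of already ordered points. -/
def NkSet (n m : ℕ) (Sk : Finset (ℕ × ℕ)) : Finset (ℕ × ℕ) :=
  (sampleSpace n m).filter (fun z => z ∉ Sk ∧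
    ((z.1 + 1, z.2) ∈ Sk ∨ (1 ≤ z.2 ∧ (z.1, z.2 - 1) ∈ Sk)))

/-- The candidate set `NC_k ⊆ N_k`: neighbors `z` with `(x+1,y) ∉ N_k` and `(x,y-1) ∉ N_k`. -/
def NCkSet (n m : ℕ) (Sk : Finset (ℕ × ℕ)) : Finset (ℕ × ℕ) :=
  (NkSet n m Sk).filter (fun z => (z.1 + 1, z.2) ∉ NkSet n m Sk ∧
    (1 ≤ z.2 → (z.1, z.2 - 1) ∉ NkSet n m Sk))

/-- `f_{z₀}(Δ) = min_{p₀ ∈ D(Δ)} P(({z₀} ∪ S_k)ᶜ)`. -/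
def foz (n m : ℕ) (Sk : Finset (ℕ × ℕ)) (z₀ : ℕ × ℕ) (Δ : ℝ) : ℝ :=
  sInf ((fun p₀ => prob n m (p₀ + Δ) p₀
    ((sampleSpace n m).filter (fun z => z ∉ insert z₀ Sk))) '' Dset Δ)

/-- `E_{z₀} = {Δ ∈ [-1,1] : f_{z₀}(Δ') ≥ 1-α ∀ Δ' < Δ}`. -/
def Ez (n m : ℕ) (α : ℝ) (Sk : Finset (ℕ × ℕ)) (z₀ : ℕ × ℕ) : Set ℝ :=
  {Δ ∈ Set.Icc (-1 : ℝ) 1 | ∀ Δ' ∈ Set.Ico (-1 : ℝ) Δ, 1 - α ≤ foz n m Sk z₀ Δ'}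

/-- `L_o(z₀) = sup E_{z₀}` if `E_{z₀} ≠ ∅`, and `-1` otherwise. -/
def Lo (n m : ℕ) (α : ℝ) (Sk : Finset (ℕ × ℕ)) (z₀ : ℕ × ℕ) : ℝ :=
  if (Ez n m α Sk z₀).Nonempty then sSup (Ez n m α Sk z₀) else -1
private lemma binomPMF_nonneg' {p : ℝ} (h0 : 0 ≤ p) (h1 : p ≤ 1) (n x : ℕ) :
    0 ≤ binomPMF n p x := by
  have h2 : (0:ℝ) ≤ 1 - p := by linarith
  exact mul_nonneg (mul_nonneg (by positivity) (pow_nonneg h0 _)) (pow_nonneg h2 _)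

private lemma prob_nonneg' {p₁ p₀ : ℝ} (h1 : 0 ≤ p₁) (h2 : p₁ ≤ 1) (h3 : 0 ≤ p₀)
    (h4 : p₀ ≤ 1) (n m : ℕ) (T : Finset (ℕ × ℕ)) : 0 ≤ prob n m p₁ p₀ T :=
  Finset.sum_nonneg fun _ _ =>
    mul_nonneg (binomPMF_nonneg' h1 h2 _ _) (binomPMF_nonneg' h3 h4 _ _)

private lemma prob_mono' {p₁ p₀ : ℝ} (h1 : 0 ≤ p₁) (h2 : p₁ ≤ 1) (h3 : 0 ≤ p₀)
    (h4 : p₀ ≤ 1) {n m : ℕ} {T T' : Finset (ℕ × ℕ)} (hT : T ⊆ T') :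
    prob n m p₁ p₀ T ≤ prob n m p₁ p₀ T' :=
  Finset.sum_le_sum_of_subset_of_nonneg hT fun _ _ _ =>
    mul_nonneg (binomPMF_nonneg' h1 h2 _ _) (binomPMF_nonneg' h3 h4 _ _)

private lemma Dset_nonempty' {Δ : ℝ} (h : Δ ∈ Set.Icc (-1:ℝ) 1) : (Dset Δ).Nonempty := by
  obtain ⟨h1, h2⟩ := h
  rcases le_total 0 Δ with hΔ | hΔ
  · exact ⟨0, le_refl 0, zero_le_one, by linarith, by linarith⟩
  · exact ⟨-Δ, by linarith, by linarith, by linarith, by linarith⟩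

private lemma neg_one_mem_Ez (n m : ℕ) (α : ℝ) (Sk : Finset (ℕ × ℕ)) (z₀ : ℕ × ℕ) :
    (-1 : ℝ) ∈ Ez n m α Sk z₀ :=
  ⟨⟨le_refl _, by norm_num⟩, fun _ hΔ' => absurd hΔ'.2 (not_lt.mpr hΔ'.1)⟩

private lemma Ez_bddAbove (n m : ℕ) (α : ℝ) (Sk : Finset (ℕ × ℕ)) (z₀ : ℕ × ℕ) :
    BddAbove (Ez n m α Sk z₀) :=
  BddAbove.mono (fun _ hΔ => hΔ.1) bddAbove_Icc

private lemma Lo_eq_sSup (n m : ℕ) (α : ℝ) (Sk : Finset (ℕ × ℕ)) (z₀ : ℕ × ℕ) :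
    Lo n m α Sk z₀ = sSup (Ez n m α Sk z₀) :=
  if_pos ⟨-1, neg_one_mem_Ez n m α Sk z₀⟩

private lemma le_Lo {n m : ℕ} {α : ℝ} {Sk : Finset (ℕ × ℕ)} {z₀ : ℕ × ℕ} {A : ℝ}
    (hA : A ∈ Ez n m α Sk z₀) : A ≤ Lo n m α Sk z₀ := by
  rw [Lo_eq_sSup]
  exact le_csSup (Ez_bddAbove n m α Sk z₀) hA

private lemma Lo_le_one (n m : ℕ) (α : ℝ) (Sk : Finset (ℕ × ℕ)) (z₀ : ℕ × ℕ) :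
    Lo n m α Sk z₀ ≤ 1 := by
  rw [Lo_eq_sSup]
  exact csSup_le ⟨-1, neg_one_mem_Ez n m α Sk z₀⟩ fun _ hx => hx.1.2

private lemma neg_one_le_Lo (n m : ℕ) (α : ℝ) (Sk : Finset (ℕ × ℕ)) (z₀ : ℕ × ℕ) :
    -1 ≤ Lo n m α Sk z₀ := le_Lo (neg_one_mem_Ez n m α Sk z₀)

private lemma Ez_antitone (n m : ℕ) (α : ℝ) {Sk Sk' : Finset (ℕ × ℕ)} {z₀ z₀' : ℕ × ℕ}
    (hsub : insert z₀ Sk ⊆ insert z₀' Sk') :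
    Ez n m α Sk' z₀' ⊆ Ez n m α Sk z₀ := by
  rintro Δ ⟨hIcc, hcond⟩
  refine ⟨hIcc, fun Δ' hΔ' => ?_⟩
  have hΔ'Icc : Δ' ∈ Set.Icc (-1:ℝ) 1 := ⟨hΔ'.1, hΔ'.2.le.trans hIcc.2⟩
  have h1 := hcond Δ' hΔ'
  refine le_csInf ((Dset_nonempty' hΔ'Icc).image _) ?_
  rintro b ⟨p₀, hp₀, rfl⟩
  obtain ⟨hp1, hp2, hp3, hp4⟩ := hp₀
  have hb0 : BddBelow ((fun p₀ => prob n m (p₀ + Δ') p₀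
      ((sampleSpace n m).filter (fun z => z ∉ insert z₀' Sk'))) '' Dset Δ') := by
    refine ⟨0, ?_⟩
    rintro b ⟨q, hq, rfl⟩
    exact prob_nonneg' hq.2.2.1 hq.2.2.2 hq.1 hq.2.1 n m _
  have h2 : foz n m Sk' z₀' Δ' ≤ prob n m (p₀ + Δ') p₀
      ((sampleSpace n m).filter (fun z => z ∉ insert z₀' Sk')) :=
    csInf_le hb0 ⟨p₀, ⟨hp1, hp2, hp3, hp4⟩, rfl⟩
  refine h1.trans (h2.trans ?_)
  show prob n m (p₀ + Δ') p₀ ((sampleSpace n m).filter (fun z => z ∉ insert z₀' Sk')) ≤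
    prob n m (p₀ + Δ') p₀ ((sampleSpace n m).filter (fun z => z ∉ insert z₀ Sk))
  refine prob_mono' hp3 hp4 hp1 hp2 ?_
  intro z hzm
  rw [Finset.mem_filter] at hzm ⊢
  exact ⟨hzm.1, fun hin => hzm.2 (hsub hin)⟩

private lemma Lo_antitone (n m : ℕ) (α : ℝ) {Sk Sk' : Finset (ℕ × ℕ)} {z₀ z₀' : ℕ × ℕ}
    (hsub : insert z₀ Sk ⊆ insert z₀' Sk') :
    Lo n m α Sk' z₀' ≤ Lo n m α Sk z₀ := by
  rw [Lo_eq_sSup, Lo_eq_sSup]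
  exact csSup_le_csSup (Ez_bddAbove n m α Sk z₀) ⟨-1, neg_one_mem_Ez n m α Sk' z₀'⟩
    (Ez_antitone n m α hsub)

/-- **Proposition 3.** If each block `C_j^B` of the greedily constructed
ordered partition contains exactly one sample point, then the corresponding smallest
interval `[L_S(Z), 1]` is admissible in the class `B_B` of one-sided `1-α` confidence
intervals satisfying the Barnard `C` conditions: any `[L(Z),1] ∈ B_B` with
`L_S(z) ≤ L(z)` for all `z ∈ S` satisfies `L_S(z) = L(z)` for all `z ∈ S`. -/
theorem greedy_partition_admissible
    (n m k₀ : ℕ) (hn : 1 ≤ n) (hm : 1 ≤ m) (hk : 0 < k₀)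
    (α : ℝ) (hα : 0 ≤ α ∧ α < 1)
    (C : Fin k₀ → Finset (ℕ × ℕ)) (hC : IsOrderedPartition n m k₀ C)
    -- the greedy construction of the partition
    (hC1 : C ⟨0, hk⟩ = {(n, 0)})
    (hgreedy : ∀ (t : ℕ) (h : t + 1 < k₀),
      C ⟨t + 1, h⟩ = (NCkSet n m (unionUpTo n m k₀ C (t + 1))).filter
        (fun z => ∀ z₀ ∈ NCkSet n m (unionUpTo n m k₀ C (t + 1)),
          Lo n m α (unionUpTo n m k₀ C (t + 1)) z₀ ≤
            Lo n m α (unionUpTo n m k₀ C (t + 1)) z))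
    -- each block contains exactly one sample point
    (hsingle : ∀ j : Fin k₀, (C j).card = 1) :
    ∀ L : ℕ × ℕ → ℝ,
      -- [L(Z),1] is a one-sided 1-α confidence interval for Δ
      (∀ Δ ∈ Set.Icc (-1 : ℝ) 1, ∀ p₀ ∈ Dset Δ,
        1 - α ≤ prob n m (p₀ + Δ) p₀ ((sampleSpace n m).filter (fun z => L z ≤ Δ))) →
      -- Barnard's "C" conditions
      (∀ x₁ x₂ y, x₁ ≤ n → x₂ ≤ n → y ≤ m → x₁ ≤ x₂ → L (x₁, y) ≤ L (x₂, y)) →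
      (∀ x y₁ y₂, x ≤ n → y₁ ≤ m → y₂ ≤ m → y₁ ≤ y₂ → L (x, y₂) ≤ L (x, y₁)) →
      -- if L dominates L_S everywhere, they coincide
      (∀ j : Fin k₀, ∀ z ∈ C j, LSj n m k₀ α C j ≤ L z) →
      ∀ j : Fin k₀, ∀ z ∈ C j, L z = LSj n m k₀ α C j := by

  intro L hcov hBx hBy hdom
  -- each block is a singleton {zfun j}
  choose zfun hz using fun j : Fin k₀ => Finset.card_eq_one.mp (hsingle j)
  have hzC : ∀ j : Fin k₀, zfun j ∈ C j := fun j => by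
    rw [hz j]; exact Finset.mem_singleton_self _
  have hzS : ∀ j : Fin k₀, zfun j ∈ sampleSpace n m := fun j => by
    rw [← hC.2.1]; exact Finset.mem_biUnion.mpr ⟨j, Finset.mem_univ _, hzC j⟩
  have hUmem : ∀ (t : ℕ) (z : ℕ × ℕ),
      z ∈ unionUpTo n m k₀ C t ↔ ∃ i : Fin k₀, (i : ℕ) < t ∧ z = zfun i := by
    intro t z
    simp only [unionUpTo, Finset.mem_filter]
    constructor
    · rintro ⟨-, i, hi, hzi⟩
      exact ⟨i, hi, by rwa [hz i, Finset.mem_singleton] at hzi⟩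
    · rintro ⟨i, hi, rfl⟩
      exact ⟨hzS i, i, hi, hzC i⟩
  have hzne : ∀ i j : Fin k₀, i ≠ j → zfun i ≠ zfun j := by
    intro i j hij heq
    have hd := hC.1 i j hij
    rw [Finset.disjoint_left] at hd
    exact hd (hzC i) (heq ▸ hzC j)
  have hznotU : ∀ (i : Fin k₀) (t : ℕ), t ≤ (i : ℕ) → zfun i ∉ unionUpTo n m k₀ C t := by
    intro i t ht hmem
    obtain ⟨i', hi', hieq⟩ := (hUmem t _).mp hmem
    have hne : i' ≠ i := by rintro rfl; omega
    exact hzne i' i hne hieq.symm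
  have hUmono : ∀ {a b : ℕ}, a ≤ b → unionUpTo n m k₀ C a ⊆ unionUpTo n m k₀ C b := by
    intro a b hab z hzm
    obtain ⟨i, hi, rfl⟩ := (hUmem a z).mp hzm
    exact (hUmem b _).mpr ⟨i, lt_of_lt_of_le hi hab, rfl⟩
  have hUinsert : ∀ (t : ℕ) (h : t < k₀),
      unionUpTo n m k₀ C (t + 1) = insert (zfun ⟨t, h⟩) (unionUpTo n m k₀ C t) := by
    intro t h
    ext z
    rw [Finset.mem_insert, hUmem, hUmem]
    constructor
    · rintro ⟨i, hi, rfl⟩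
      rcases Nat.lt_succ_iff_lt_or_eq.mp hi with hi' | hi'
      · exact Or.inr ⟨i, hi', rfl⟩
      · exact Or.inl (by rw [show i = (⟨t, h⟩ : Fin k₀) from Fin.ext hi'])
    · rintro (rfl | ⟨i, hi, rfl⟩)
      · exact ⟨⟨t, h⟩, Nat.lt_succ_self t, rfl⟩
      · exact ⟨i, Nat.lt_succ_of_lt hi, rfl⟩
  have hU0 : unionUpTo n m k₀ C 0 = ∅ := by
    rw [Finset.eq_empty_iff_forall_notMem]
    intro z hzm
    obtain ⟨i, hi, -⟩ := (hUmem 0 z).mp hzm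
    exact Nat.not_lt_zero _ hi
  have hSjCompl : ∀ j : Fin k₀, SjCompl n m k₀ C j =
      (sampleSpace n m).filter
        (fun z => z ∉ insert (zfun j) (unionUpTo n m k₀ C (j : ℕ))) := by
    intro j
    ext z
    simp only [SjCompl, Finset.mem_filter]
    refine and_congr_right fun hS => not_congr ?_
    rw [Finset.mem_insert, hUmem]
    constructor
    · rintro ⟨i, hij, hzi⟩
      have hz' : z = zfun i := by rwa [hz i, Finset.mem_singleton] at hzi
      rcases lt_or_eq_of_le (Fin.le_def.mp hij) with h' | h'
      · exact Or.inr ⟨i, h', hz'⟩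
      · exact Or.inl (by rw [hz', show i = j from Fin.ext h'])
    · rintro (rfl | ⟨i, hi, rfl⟩)
      · exact ⟨j, le_refl j, hzC j⟩
      · exact ⟨i, Fin.le_def.mpr (le_of_lt hi), hzC i⟩
  have hGj_eq : ∀ j : Fin k₀,
      Gj n m k₀ α C j = Ez n m α (unionUpTo n m k₀ C (j : ℕ)) (zfun j) := by
    intro j
    have hf : fj n m k₀ C j = foz n m (unionUpTo n m k₀ C (j : ℕ)) (zfun j) := by
      funext Δ
      unfold fj foz
      rw [hSjCompl j]
    unfold Gj Ez
    rw [hf]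
  have hLS_eq : ∀ j : Fin k₀,
      LSj n m k₀ α C j = Lo n m α (unionUpTo n m k₀ C (j : ℕ)) (zfun j) := by
    intro j
    unfold LSj Lo
    rw [hGj_eq j]
  have hLSle1 : ∀ j : Fin k₀, LSj n m k₀ α C j ≤ 1 := fun j => by
    rw [hLS_eq j]; exact Lo_le_one _ _ _ _ _
  have hLSge : ∀ j : Fin k₀, -1 ≤ LSj n m k₀ α C j := fun j => by
    rw [hLS_eq j]; exact neg_one_le_Lo _ _ _ _ _
  have hLSmono : ∀ i j : Fin k₀, i ≤ j → LSj n m k₀ α C j ≤ LSj n m k₀ α C i := by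
    intro i j hij
    rw [hLS_eq i, hLS_eq j]
    apply Lo_antitone
    rw [← hUinsert _ i.isLt, ← hUinsert _ j.isLt]
    exact hUmono (Nat.succ_le_succ (Fin.le_def.mp hij))
  -- coverage-based membership criterion for Ez
  have hEz_crit : ∀ (Sk : Finset (ℕ × ℕ)) (z₀ : ℕ × ℕ) (A : ℝ),
      A ∈ Set.Icc (-1:ℝ) 1 → (∀ z ∈ insert z₀ Sk, A ≤ L z) → A ∈ Ez n m α Sk z₀ := by
    intro Sk z₀ A hA hge
    refine ⟨hA, fun Δ' hΔ' => ?_⟩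
    have hΔ'Icc : Δ' ∈ Set.Icc (-1:ℝ) 1 := ⟨hΔ'.1, hΔ'.2.le.trans hA.2⟩
    refine le_csInf ((Dset_nonempty' hΔ'Icc).image _) ?_
    rintro b ⟨p₀, hp₀, rfl⟩
    obtain ⟨hp1, hp2, hp3, hp4⟩ := hp₀
    have h1 := hcov Δ' hΔ'Icc p₀ ⟨hp1, hp2, hp3, hp4⟩
    refine h1.trans ?_
    show prob n m (p₀ + Δ') p₀ ((sampleSpace n m).filter (fun z => L z ≤ Δ')) ≤
      prob n m (p₀ + Δ') p₀ ((sampleSpace n m).filter (fun z => z ∉ insert z₀ Sk))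
    refine prob_mono' hp3 hp4 hp1 hp2 ?_
    intro z hzm
    rw [Finset.mem_filter] at hzm ⊢
    refine ⟨hzm.1, fun hins => ?_⟩
    have := hge z hins
    have := hzm.2
    have := hΔ'.2
    linarith
  -- the first point is (n, 0)
  have hz0eq : zfun ⟨0, hk⟩ = (n, 0) :=
    Finset.singleton_inj.mp ((hz ⟨0, hk⟩).symm.trans hC1)
  -- coordinates of sample points are bounded
  have hbound : ∀ z ∈ sampleSpace n m, z.1 ≤ n ∧ z.2 ≤ m := by
    intro z hz'
    simp only [sampleSpace, Finset.mem_product, Finset.mem_range] at hz'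
    omega
  -- L (n, 0) ≤ 1, from coverage at Δ = 1
  have hLn0 : L (n, 0) ≤ 1 := by
    by_contra hgt
    push_neg at hgt
    have hc := hcov 1 ⟨by norm_num, le_refl 1⟩ 0 ⟨le_refl 0, zero_le_one, by norm_num, by norm_num⟩
    have hzero : prob n m ((0:ℝ) + 1) 0 ((sampleSpace n m).filter (fun z => L z ≤ 1)) = 0 := by
      apply Finset.sum_eq_zero
      intro z hzm
      rw [Finset.mem_filter] at hzm
      have hz1 : z.1 ≤ n := (hbound z hzm.1).1
      have hne : z ≠ (n, 0) := fun h => absurd hzm.2 (not_le.mpr (h ▸ hgt))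
      rcases Nat.lt_or_ge z.1 n with h1 | h1
      · have he : binomPMF n ((0:ℝ) + 1) z.1 = 0 := by
          unfold binomPMF
          have e : (1 - ((0:ℝ) + 1)) = 0 := by norm_num
          rw [e, zero_pow (by omega : n - z.1 ≠ 0), mul_zero]
        rw [he, zero_mul]
      · have h1' : z.1 = n := le_antisymm hz1 h1
        have h2 : z.2 ≠ 0 := fun h => hne (Prod.ext h1' h)
        have he : binomPMF m (0:ℝ) z.2 = 0 := by
          unfold binomPMF
          rw [zero_pow h2, mul_zero, zero_mul]
        rw [he, mul_zero]
    rw [hzero] at hc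
    linarith [hα.2]
  -- main induction: L (zfun j) ≤ LSj j, by strong induction along the greedy order
  have key : ∀ t : ℕ, ∀ ht : t < k₀, L (zfun ⟨t, ht⟩) ≤ LSj n m k₀ α C ⟨t, ht⟩ := by
    intro t
    induction t using Nat.strong_induction_on with
    | _ t IH =>
    rcases t with _ | s
    · -- base case t = 0
      intro ht
      have hz0 : zfun ⟨0, ht⟩ = (n, 0) := hz0eq
      have hAm1 : -1 ≤ L (zfun ⟨0, ht⟩) := le_trans (hLSge _) (hdom _ _ (hzC _))
      have hA1 : L (zfun ⟨0, ht⟩) ≤ 1 := by rw [hz0]; exact hLn0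
      rw [hLS_eq ⟨0, ht⟩]
      apply le_Lo
      apply hEz_crit _ _ _ ⟨hAm1, hA1⟩
      intro z hzm
      have hU0' : unionUpTo n m k₀ C ((⟨0, ht⟩ : Fin k₀) : ℕ) = ∅ := hU0
      rw [hU0'] at hzm
      rcases Finset.mem_insert.mp hzm with rfl | hzm'
      · exact le_refl _
      · exact absurd hzm' (Finset.notMem_empty z)
    · -- inductive step t = s + 1
      intro ht
      have hs : s < k₀ := Nat.lt_of_succ_lt ht
      have heq : ∀ i : Fin k₀, (i : ℕ) < s + 1 → L (zfun i) = LSj n m k₀ α C i := by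
        intro i hi
        have h1 := IH (i : ℕ) hi i.isLt
        simp only [Fin.eta] at h1
        exact le_antisymm h1 (hdom i _ (hzC i))
      -- the chosen point at step s+1
      have hzcC := hzC ⟨s + 1, ht⟩
      rw [hgreedy s ht] at hzcC
      simp only [Finset.mem_filter] at hzcC
      obtain ⟨hzcNC, hzcmax⟩ := hzcC
      obtain ⟨hzcN, hcor1, hcor2⟩ := Finset.mem_filter.mp hzcNC
      obtain ⟨hzcS, hzcnotU, hzcnbr⟩ := Finset.mem_filter.mp hzcN
      have hU1 : unionUpTo n m k₀ C (s + 1) =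
          insert (zfun ⟨s, hs⟩) (unionUpTo n m k₀ C s) := hUinsert s hs
      -- main estimate: L zc ≤ LSj at step s
      have hle : L (zfun ⟨s + 1, ht⟩) ≤ LSj n m k₀ α C ⟨s, hs⟩ := by
        by_cases hadj : (zfun ⟨s, hs⟩ = ((zfun ⟨s + 1, ht⟩).1 + 1, (zfun ⟨s + 1, ht⟩).2)) ∨
            (1 ≤ (zfun ⟨s + 1, ht⟩).2 ∧
              zfun ⟨s, hs⟩ = ((zfun ⟨s + 1, ht⟩).1, (zfun ⟨s + 1, ht⟩).2 - 1))
        · -- case (a): the previous point is a Barnard neighbor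
          rw [← heq ⟨s, hs⟩ (Nat.lt_succ_self s)]
          have hzpS := hzS ⟨s, hs⟩
          rcases hadj with h | ⟨hy, h⟩
          · have hzpS' := hzpS
            rw [h] at hzpS'
            have hb := hBx (zfun ⟨s + 1, ht⟩).1 ((zfun ⟨s + 1, ht⟩).1 + 1) (zfun ⟨s + 1, ht⟩).2
              (hbound _ hzcS).1 ((hbound _ hzpS').1) (hbound _ hzcS).2 (Nat.le_succ _)
            calc L (zfun ⟨s + 1, ht⟩) = L ((zfun ⟨s + 1, ht⟩).1, (zfun ⟨s + 1, ht⟩).2) := by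
                  rw [Prod.mk.eta]
              _ ≤ L ((zfun ⟨s + 1, ht⟩).1 + 1, (zfun ⟨s + 1, ht⟩).2) := hb
              _ = L (zfun ⟨s, hs⟩) := by rw [h]
          · have hb := hBy (zfun ⟨s + 1, ht⟩).1 ((zfun ⟨s + 1, ht⟩).2 - 1) (zfun ⟨s + 1, ht⟩).2
              (hbound _ hzcS).1 (le_trans (Nat.sub_le _ _) (hbound _ hzcS).2)
              (hbound _ hzcS).2 (Nat.sub_le _ _)
            calc L (zfun ⟨s + 1, ht⟩) = L ((zfun ⟨s + 1, ht⟩).1, (zfun ⟨s + 1, ht⟩).2) := by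
                  rw [Prod.mk.eta]
              _ ≤ L ((zfun ⟨s + 1, ht⟩).1, (zfun ⟨s + 1, ht⟩).2 - 1) := hb
              _ = L (zfun ⟨s, hs⟩) := by rw [h]
        · -- case (b): zc was already a candidate at step s
          push_neg at hadj
          have hnbr' : ((zfun ⟨s + 1, ht⟩).1 + 1, (zfun ⟨s + 1, ht⟩).2) ∈ unionUpTo n m k₀ C s ∨
              (1 ≤ (zfun ⟨s + 1, ht⟩).2 ∧
                ((zfun ⟨s + 1, ht⟩).1, (zfun ⟨s + 1, ht⟩).2 - 1) ∈ unionUpTo n m k₀ C s) := by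
            rcases hzcnbr with hcase | ⟨hy, hcase⟩
            · rw [hU1, Finset.mem_insert] at hcase
              rcases hcase with hh | hh
              · exact absurd hh.symm hadj.1
              · exact Or.inl hh
            · rw [hU1, Finset.mem_insert] at hcase
              rcases hcase with hh | hh
              · exact absurd hh.symm (hadj.2 hy)
              · exact Or.inr ⟨hy, hh⟩
          rcases Nat.eq_zero_or_pos s with rfl | hspos
          · exfalso
            rcases hnbr' with hh | ⟨-, hh⟩ <;> rw [hU0] at hh <;>
              exact absurd hh (Finset.notMem_empty _)
          · obtain ⟨r, rfl⟩ : ∃ r, s = r + 1 := ⟨s - 1, by omega⟩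
            -- zc is a candidate already with respect to U (r+1)
            have hzcnotUs : zfun ⟨r + 1 + 1, ht⟩ ∉ unionUpTo n m k₀ C (r + 1) :=
              fun hmem => hzcnotU (hU1 ▸ Finset.mem_insert_of_mem hmem)
            have hzcNs : zfun ⟨r + 1 + 1, ht⟩ ∈ NkSet n m (unionUpTo n m k₀ C (r + 1)) :=
              Finset.mem_filter.mpr ⟨hzcS, hzcnotUs, hnbr'⟩
            have hlift : ∀ b, b ∈ NkSet n m (unionUpTo n m k₀ C (r + 1)) →
                b ≠ zfun ⟨r + 1, hs⟩ → b ∈ NkSet n m (unionUpTo n m k₀ C (r + 1 + 1)) := by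
              intro b hb hbne
              obtain ⟨hbS, hbnot, hbnbr⟩ := Finset.mem_filter.mp hb
              refine Finset.mem_filter.mpr ⟨hbS, ?_, ?_⟩
              · rw [hU1, Finset.mem_insert]
                rintro (h | h)
                · exact hbne h
                · exact hbnot h
              · rcases hbnbr with h | ⟨hy, h⟩
                · exact Or.inl (hU1 ▸ Finset.mem_insert_of_mem h)
                · exact Or.inr ⟨hy, hU1 ▸ Finset.mem_insert_of_mem h⟩
            have hcor1' : ((zfun ⟨r + 1 + 1, ht⟩).1 + 1, (zfun ⟨r + 1 + 1, ht⟩).2) ∉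
                NkSet n m (unionUpTo n m k₀ C (r + 1)) :=
              fun hbN => hcor1 (hlift _ hbN (fun e => hadj.1 e.symm))
            have hcor2' : 1 ≤ (zfun ⟨r + 1 + 1, ht⟩).2 →
                ((zfun ⟨r + 1 + 1, ht⟩).1, (zfun ⟨r + 1 + 1, ht⟩).2 - 1) ∉
                NkSet n m (unionUpTo n m k₀ C (r + 1)) :=
              fun hy hbN => hcor2 hy (hlift _ hbN (fun e => hadj.2 hy e.symm))
            have hzcNCs : zfun ⟨r + 1 + 1, ht⟩ ∈ NCkSet n m (unionUpTo n m k₀ C (r + 1)) :=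
              Finset.mem_filter.mpr ⟨hzcNs, hcor1', hcor2'⟩
            -- the point chosen at step r+1 is a maximizer of Lo
            have hzpC := hzC ⟨r + 1, hs⟩
            rw [hgreedy r hs] at hzpC
            simp only [Finset.mem_filter] at hzpC
            obtain ⟨hzpNC, hzpmax⟩ := hzpC
            have hLole : Lo n m α (unionUpTo n m k₀ C (r + 1)) (zfun ⟨r + 1 + 1, ht⟩) ≤
                Lo n m α (unionUpTo n m k₀ C (r + 1)) (zfun ⟨r + 1, hs⟩) :=
              hzpmax _ hzcNCs
            by_contra hgt
            push_neg at hgt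
            have hmem : LSj n m k₀ α C ⟨r + 1, hs⟩ ∈
                Ez n m α (unionUpTo n m k₀ C (r + 1)) (zfun ⟨r + 1 + 1, ht⟩) := by
              apply hEz_crit _ _ _ ⟨hLSge _, hLSle1 _⟩
              intro z hzm
              rcases Finset.mem_insert.mp hzm with rfl | hzm'
              · exact hgt.le
              · obtain ⟨i, hi, rfl⟩ := (hUmem _ _).mp hzm'
                rw [heq i (by omega)]
                exact hLSmono i ⟨r + 1, hs⟩ (Fin.le_def.mpr (by show (i : ℕ) ≤ r + 1; omega))
            have h1 : LSj n m k₀ α C ⟨r + 1, hs⟩ ≤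
                Lo n m α (unionUpTo n m k₀ C (r + 1)) (zfun ⟨r + 1 + 1, ht⟩) := le_Lo hmem
            have h2 : Lo n m α (unionUpTo n m k₀ C (r + 1)) (zfun ⟨r + 1, hs⟩) =
                LSj n m k₀ α C ⟨r + 1, hs⟩ := (hLS_eq ⟨r + 1, hs⟩).symm
            have heqLo : Lo n m α (unionUpTo n m k₀ C (r + 1)) (zfun ⟨r + 1 + 1, ht⟩) =
                Lo n m α (unionUpTo n m k₀ C (r + 1)) (zfun ⟨r + 1, hs⟩) :=
              le_antisymm hLole (h2 ▸ h1)
            have hzcmem : zfun ⟨r + 1 + 1, ht⟩ ∈ C ⟨r + 1, hs⟩ := by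
              rw [hgreedy r hs]
              simp only [Finset.mem_filter]
              exact ⟨hzcNCs, fun z₀ h₀ => (hzpmax z₀ h₀).trans heqLo.symm.le⟩
            have hzceq : zfun ⟨r + 1 + 1, ht⟩ = zfun ⟨r + 1, hs⟩ := by
              rw [hz ⟨r + 1, hs⟩] at hzcmem
              exact Finset.mem_singleton.mp hzcmem
            exact hzne _ _ (fun h => by simp [Fin.ext_iff] at h) hzceq
      -- conclude using the Ez criterion at step s+1
      have hA : L (zfun ⟨s + 1, ht⟩) ∈ Set.Icc (-1:ℝ) 1 :=
        ⟨le_trans (hLSge _) (hdom _ _ (hzC _)), hle.trans (hLSle1 _)⟩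
      rw [hLS_eq ⟨s + 1, ht⟩]
      apply le_Lo
      apply hEz_crit _ _ _ hA
      intro z hzm
      have hval : ((⟨s + 1, ht⟩ : Fin k₀) : ℕ) = s + 1 := rfl
      rw [hval] at hzm
      rcases Finset.mem_insert.mp hzm with rfl | hzm'
      · exact le_refl _
      · obtain ⟨i, hi, rfl⟩ := (hUmem _ _).mp hzm'
        rw [heq i hi]
        exact hle.trans (hLSmono i ⟨s, hs⟩ (Fin.le_def.mpr (by show (i : ℕ) ≤ s; omega)))
  -- wrap up
  intro j z hzmem
  have hzj : z = zfun j := by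
    rw [hz j] at hzmem
    exact Finset.mem_singleton.mp hzmem
  subst hzj
  have h1 := key (j : ℕ) j.isLt
  simp only [Fin.eta] at h1
  exact le_antisymm h1 (hdom j _ (hzC j))
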